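/- There exists a constant C > 0 such that for every n ≥ 1 and every word A^(n) = (A₁,…,A_n) ∈ 𝒜ⁿ, the function g(x) := |h_{A^(n)}'(x)| · f_μ(h_{A^(n)}(x)) / f_μ(x) on [0,1] (which equals the n-th iterate of the normalized transfer operator applied to the indicator of I_{A^(n)}) has total variation Var_{[0,1]}(g) ≤ C · μ(I_{A^(n)}). -/

import Mathlib

open MeasureTheory Real Set Filter Topology

namespace SCF

/-- The involution `ι(x) = (1−x)/(1+x)`. -/
noncomputable def iota (x : ℝ) : ℝ := (1 - x) / (1 + x)

/-- Even continued-fraction step.  For `y ∈ (0,1/2]` one has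
`⌊(1/y+1)/2⌋ = k` whenever `1/y ∈ (2k−1, 2k+1)`, so `Te y = |1/y − 2k|`;
explicitly `Te y = 1/y − 2` on `[1/3,1/2]`, `Te y = 1/y − 2k` on
`[1/(2k+1), 1/(2k))` and `Te y = 2k − 1/y` on `[1/(2k), 1/(2k−1))` (`k ≥ 2`). -/
noncomputable def Te (y : ℝ) : ℝ := |1 / y - 2 * (⌊(1 / y + 1) / 2⌋ : ℝ)|

/-- The spliced continued fraction (SCF) map `T : [0,1] → [0,1]`, with
`T 0 = 0`, `T 1 = 1`.  On `(0,1/2]` it is the even continued fraction map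
(see `Te`), and on `(1/2,1)` it is the odd–odd map, which is the conjugate
`ι ∘ Te ∘ ι` of the even map; this agrees with the branchwise definition:
`T x = (k x − (k−1))/(k − (k+1) x)` on `((k−1)/k, (2k−1)/(2k+1)]` and
`T x = (k − (k+1) x)/(k x − (k−1))` on `((2k−1)/(2k+1), k/(k+1)]` for `k ≥ 2`. -/
noncomputable def T (x : ℝ) : ℝ :=
  if x ≤ 0 then 0
  else if 1 ≤ x then 1
  else if x ≤ 1 / 2 then Te x
  else iota (Te (iota x))

/-- Parity label of a digit: `e` (even cusp) or `o` (odd–odd cusp). -/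
inductive Par | e | o
deriving DecidableEq

/-- A candidate SCF digit `(a, ε)_s`. -/
structure Digit where
  a : ℤ
  eps : ℤ
  s : Par
deriving DecidableEq

/-- The digit set `𝒜 = {(k,ε)_s : k ≥ 2, ε = ±1, s ∈ {e,o}} ∪ {(1,+1)_e}`. -/
def Digit.Valid (d : Digit) : Prop :=
  (2 ≤ d.a ∧ (d.eps = 1 ∨ d.eps = -1)) ∨ (d.a = 1 ∧ d.eps = 1 ∧ d.s = Par.e)

/-- The branch intervals `I_{(a,ε)_s}` of the SCF map. -/
noncomputable def branch (d : Digit) : Set ℝ :=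
  match d.s with
  | Par.e =>
      if d.a = 1 then Set.Icc (1/3 : ℝ) (1/2)
      else if d.eps = 1 then Set.Ico (1 / (2 * (d.a : ℝ) + 1)) (1 / (2 * (d.a : ℝ)))
      else Set.Ico (1 / (2 * (d.a : ℝ))) (1 / (2 * (d.a : ℝ) - 1))
  | Par.o =>
      if d.eps = 1 then
        Set.Ioc ((2 * (d.a : ℝ) - 1) / (2 * (d.a : ℝ) + 1)) ((d.a : ℝ) / ((d.a : ℝ) + 1))
      else
        Set.Ioc (((d.a : ℝ) - 1) / (d.a : ℝ)) ((2 * (d.a : ℝ) - 1) / (2 * (d.a : ℝ) + 1))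

open Classical in
/-- The SCF digit of a point `y` (the unique valid digit `d` with `y ∈ I_d`;
well defined for every `y ∈ (0,1)`). -/
noncomputable def digit (y : ℝ) : Digit :=
  if h : ∃ d : Digit, d.Valid ∧ y ∈ branch d then h.choose else ⟨1, 1, Par.e⟩

/-- The `n`-th SCF digit `(a_n(x), ε_n(x))_{s_n(x)}` of `x`, `n ≥ 1`,
determined by `T^[n−1] x ∈ I_{(a_n,ε_n)_{s_n}}`. -/
noncomputable def dig (n : ℕ) (x : ℝ) : Digit := digit (T^[n - 1] x)

/-- The `n`-th SCF partial quotient `a_n(x)`. -/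
noncomputable def a (n : ℕ) (x : ℝ) : ℤ := (dig n x).a

/-- The invariant density `f_μ`. -/
noncomputable def fdens (x : ℝ) : ℝ :=
  2 / (Real.log (2 + Real.sqrt 3) * (1 - (2 - Real.sqrt 3) * x) * (1 + Real.sqrt 3 * x))

/-- The absolutely continuous `T`-invariant probability measure `μ` on `(0,1)`. -/
noncomputable def mu : Measure ℝ :=
  (volume.restrict (Set.Ioo (0 : ℝ) 1)).withDensity fun x => ENNReal.ofReal (fdens x)

/-- The inverse branches `h_{(a,ε)_s}` of the SCF map `T`. -/
noncomputable def h (d : Digit) (x : ℝ) : ℝ :=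
  match d.s with
  | Par.e => 1 / (2 * (d.a : ℝ) + (d.eps : ℝ) * x)
  | Par.o =>
      if d.eps = 1 then (((d.a : ℝ) - 1) * x + (d.a : ℝ)) / ((d.a : ℝ) * x + ((d.a : ℝ) + 1))
      else ((d.a : ℝ) * x + ((d.a : ℝ) - 1)) / (((d.a : ℝ) + 1) * x + (d.a : ℝ))

/-- Composed inverse branch `h_{A^{(n)}} = h_{A₁} ∘ ⋯ ∘ h_{A_n}` of a word. -/
noncomputable def hWord (l : List Digit) : ℝ → ℝ :=
  l.foldr (fun d g => h d ∘ g) id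

/-- The dual inverse branches `bar h_{(b,η)_t}`. -/
noncomputable def hbar (d : Digit) (y : ℝ) : ℝ :=
  match d.s with
  | Par.e => (d.eps : ℝ) / (2 * (d.a : ℝ) + y)
  | Par.o =>
      1 / (1 + (d.eps : ℝ) / (((d.a : ℝ) - ((max 0 d.eps : ℤ) : ℝ)) + 1 / (1 + y)))

/-- The matrix `M_{(a,ε)_s}` associated with the inverse branch `h_{(a,ε)_s}`. -/
noncomputable def Mdig (d : Digit) : Matrix (Fin 2) (Fin 2) ℝ :=
  match d.s with
  | Par.e => !![0, 1; (d.eps : ℝ), 2 * (d.a : ℝ)]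
  | Par.o =>
      !![(d.a : ℝ) - ((max 0 d.eps : ℤ) : ℝ), (d.a : ℝ) - ((max 0 d.eps : ℤ) : ℝ) + (d.eps : ℝ);
         (d.a : ℝ) - ((max 0 d.eps : ℤ) : ℝ) + 1, (d.a : ℝ) - ((max 0 d.eps : ℤ) : ℝ) + (d.eps : ℝ) + 1]

/-- `M_n(x) = M_{(a₁,ε₁)_{s₁}} ⋯ M_{(a_n,ε_n)_{s_n}}`. -/
noncomputable def Mn (n : ℕ) (x : ℝ) : Matrix (Fin 2) (Fin 2) ℝ :=
  ((List.range n).map fun i => Mdig (digit (T^[i] x))).prod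

/-- `P_n(x)`: the `(1,2)`-entry of `M_n(x)` (numerator of the `n`-th convergent). -/
noncomputable def Pc (n : ℕ) (x : ℝ) : ℝ := Mn n x 0 1

/-- `Q_n(x)`: the `(2,2)`-entry of `M_n(x)` (denominator of the `n`-th convergent). -/
noncomputable def Qc (n : ℕ) (x : ℝ) : ℝ := Mn n x 1 1



/-! ### Auxiliary lemmas for the variation bound -/

lemma sqrt3_lb' : (17/10:ℝ) ≤ Real.sqrt 3 := by
  have h := Real.sq_sqrt (by norm_num : (3:ℝ) ≥ 0)
  nlinarith [Real.sqrt_nonneg 3]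

lemma sqrt3_ub' : Real.sqrt 3 ≤ 9/5 := by
  have h := Real.sq_sqrt (by norm_num : (3:ℝ) ≥ 0)
  nlinarith [Real.sqrt_nonneg 3]

lemma log_lb' : (1/2:ℝ) ≤ Real.log (2 + Real.sqrt 3) := by
  have h1 : Real.log 2 ≤ Real.log (2 + Real.sqrt 3) :=
    Real.log_le_log (by norm_num) (by nlinarith [Real.sqrt_nonneg 3])
  nlinarith [Real.log_two_gt_d9]

lemma log_ub' : Real.log (2 + Real.sqrt 3) ≤ 7/5 := by
  have h1 : Real.log (2 + Real.sqrt 3) ≤ Real.log 4 :=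
    Real.log_le_log (by positivity) (by nlinarith [sqrt3_ub'])
  have h4 : Real.log 4 = 2 * Real.log 2 := by
    rw [show (4:ℝ) = 2^2 by norm_num, Real.log_pow]; push_cast; ring
  nlinarith [Real.log_two_lt_d9]

/-- The denominator of the invariant density. -/
noncomputable def Wd (x : ℝ) : ℝ :=
  Real.log (2 + Real.sqrt 3) * (1 - (2 - Real.sqrt 3) * x) * (1 + Real.sqrt 3 * x)

lemma Wd_bounds {x : ℝ} (hx : x ∈ Icc (0:ℝ) 1) : (7/20:ℝ) ≤ Wd x ∧ Wd x ≤ 4 := by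
  obtain ⟨h0, h1⟩ := hx
  have hs1 := sqrt3_lb'; have hs2 := sqrt3_ub'
  have hl1 := log_lb'; have hl2 := log_ub'
  have hu1 : (7/10:ℝ) ≤ 1 - (2 - Real.sqrt 3) * x := by nlinarith
  have hu2 : 1 - (2 - Real.sqrt 3) * x ≤ 1 := by nlinarith
  have hv1 : (1:ℝ) ≤ 1 + Real.sqrt 3 * x := by nlinarith
  have hv2 : 1 + Real.sqrt 3 * x ≤ 14/5 := by nlinarith
  have p1 : (1/2:ℝ)*(7/10) ≤ Real.log (2 + Real.sqrt 3) * (1 - (2 - Real.sqrt 3) * x) :=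
    mul_le_mul hl1 hu1 (by norm_num) (by linarith)
  have p1' : Real.log (2 + Real.sqrt 3) * (1 - (2 - Real.sqrt 3) * x) ≤ (7/5:ℝ)*1 :=
    mul_le_mul hl2 hu2 (by linarith) (by norm_num)
  unfold Wd
  constructor
  · have := mul_le_mul p1 hv1 (by norm_num) (by linarith)
    linarith
  · have := mul_le_mul p1' hv2 (by linarith) (by norm_num)
    linarith

lemma fdens_eq' (x : ℝ) : fdens x = 2 / Wd x := rfl

lemma fdens_bounds {x : ℝ} (hx : x ∈ Icc (0:ℝ) 1) : (1/2:ℝ) ≤ fdens x ∧ fdens x ≤ 6 := by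
  obtain ⟨hw1, hw2⟩ := Wd_bounds hx
  rw [fdens_eq']
  constructor
  · rw [le_div_iff₀ (by linarith)]; linarith
  · rw [div_le_iff₀ (by linarith)]; linarith

lemma Wd_lip_aux {L s x y : ℝ} (hl1 : 1/2 ≤ L) (hl2 : L ≤ 7/5)
    (hs1 : 17/10 ≤ s) (hs2 : s ≤ 9/5) (hss : s^2 = 3)
    (h0 : 0 ≤ x) (h1 : x ≤ 1) (k0 : 0 ≤ y) (k1 : y ≤ 1) :
    |L * (1 - (2 - s) * y) * (1 + s * y) - L * (1 - (2 - s) * x) * (1 + s * x)|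
      ≤ 3 * |x - y| := by
  have ht0 : (0:ℝ) ≤ 2*s - 3 := by nlinarith
  have hB0 : (0:ℝ) ≤ (2*s - 2) - (2 - s)*s*(x + y) := by
    nlinarith [mul_nonneg ht0 (show (0:ℝ) ≤ 2 - (x+y) by linarith)]
  have hB1 : (2*s - 2) - (2 - s)*s*(x + y) ≤ 8/5 := by
    nlinarith [mul_nonneg ht0 (show (0:ℝ) ≤ x+y by linarith)]
  have hLB0 : 0 ≤ L*((2*s - 2) - (2 - s)*s*(x + y)) := mul_nonneg (by linarith) hB0
  have hLB1 : L*((2*s - 2) - (2 - s)*s*(x + y)) ≤ 56/25 := by nlinarith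
  have hexp : L * (1 - (2 - s) * y) * (1 + s * y) - L * (1 - (2 - s) * x) * (1 + s * x)
      = (L*((2*s - 2) - (2 - s)*s*(x + y))) * (y - x) := by ring
  rw [hexp, abs_mul, abs_of_nonneg hLB0, abs_sub_comm y x]
  have := mul_le_mul_of_nonneg_right hLB1 (abs_nonneg (y - x))
  rw [abs_sub_comm y x] at this
  nlinarith [abs_nonneg (x - y)]

lemma Wd_lip {x y : ℝ} (hx : x ∈ Icc (0:ℝ) 1) (hy : y ∈ Icc (0:ℝ) 1) :
    |Wd y - Wd x| ≤ 3 * |x - y| := by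
  have hss : Real.sqrt 3 ^ 2 = 3 := Real.sq_sqrt (by norm_num)
  exact Wd_lip_aux log_lb' log_ub' sqrt3_lb' sqrt3_ub' hss hx.1 hx.2 hy.1 hy.2

lemma fdens_lip {x y : ℝ} (hx : x ∈ Icc (0:ℝ) 1) (hy : y ∈ Icc (0:ℝ) 1) :
    |fdens x - fdens y| ≤ 100 * |x - y| := by
  obtain ⟨hw1, hw2⟩ := Wd_bounds hx
  obtain ⟨hv1, hv2⟩ := Wd_bounds hy
  have hx0 : Wd x ≠ 0 := by linarith
  have hy0 : Wd y ≠ 0 := by linarith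
  have key : fdens x - fdens y = 2 * (Wd y - Wd x) / (Wd x * Wd y) := by
    rw [fdens_eq', fdens_eq']; field_simp
  have hl := Wd_lip hx hy
  have hprod : (0:ℝ) < Wd x * Wd y := by nlinarith
  rw [key, abs_div, abs_mul, abs_of_pos hprod]
  rw [div_le_iff₀ hprod]
  have h2 : |(2:ℝ)| = 2 := by norm_num
  rw [h2]
  have hWW : (49/400:ℝ) ≤ Wd x * Wd y := by nlinarith
  have := mul_le_mul_of_nonneg_left hWW (abs_nonneg (x - y))
  nlinarith [abs_nonneg (x - y), abs_nonneg (Wd y - Wd x)]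

lemma fdens_measurable : Measurable fdens := by
  have hc : Continuous fun x : ℝ =>
      Real.log (2 + Real.sqrt 3) * (1 - (2 - Real.sqrt 3) * x) * (1 + Real.sqrt 3 * x) := by
    continuity
  exact measurable_const.div hc.measurable

lemma hWord_cons' (d : Digit) (t : List Digit) (x : ℝ) :
    hWord (d :: t) x = h d (hWord t x) := rfl

lemma hWord_single' (d : Digit) (x : ℝ) : hWord [d] x = h d x := rfl

lemma Icc01_subset_J : Icc (0:ℝ) 1 ⊆ Icc (-(1:ℝ)/2) (3/2) := by
  apply Icc_subset_Icc <;> norm_num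

/-- Integer Möbius representation of a single inverse branch, on `J = [-1/2, 3/2]`. -/
lemma digit_rep (d : Digit) (hd : d.Valid) :
    ∃ α β γ δ : ℤ, (α*δ - β*γ)^2 = 1 ∧ ∀ x ∈ Icc (-(1:ℝ)/2) (3/2),
      0 < (γ:ℝ)*x + δ ∧ 0 ≤ (α:ℝ)*x + β ∧ (α:ℝ)*x + β ≤ (γ:ℝ)*x + δ ∧
      h d x = ((α:ℝ)*x + β)/((γ:ℝ)*x + δ) := by
  obtain ⟨a, ε, sp⟩ := d
  cases sp with
  | e =>
    simp only [Digit.Valid] at hd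
    refine ⟨0, 1, ε, 2*a, ?_, ?_⟩
    · rcases hd with ⟨_, hε | hε⟩ | ⟨_, hε, _⟩ <;> subst hε <;> ring
    · intro x hx
      obtain ⟨hx0, hx1⟩ := hx
      have hcase : ((ε:ℝ) = 1 ∧ (1:ℝ) ≤ (a:ℝ)) ∨ ((ε:ℝ) = -1 ∧ (2:ℝ) ≤ (a:ℝ)) := by
        rcases hd with ⟨ha, hε | hε⟩ | ⟨ha, hε, _⟩
        · exact Or.inl ⟨by rw [hε]; norm_num, by exact_mod_cast (by omega : (1:ℤ) ≤ a)⟩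
        · exact Or.inr ⟨by rw [hε]; norm_num, by exact_mod_cast ha⟩
        · exact Or.inl ⟨by rw [hε]; norm_num, by exact_mod_cast (by omega : (1:ℤ) ≤ a)⟩
      have hden : (1:ℝ) ≤ (ε:ℝ)*x + 2*(a:ℝ) := by
        rcases hcase with ⟨hε, ha⟩ | ⟨hε, ha⟩ <;> rw [hε] <;> nlinarith
      refine ⟨by push_cast; linarith, by norm_num, by push_cast; linarith, ?_⟩
      show 1 / (2 * (a : ℝ) + (ε : ℝ) * x) = _
      push_cast
      rw [show (0:ℝ)*x + 1 = 1 by ring, show (ε:ℝ)*x + 2*(a:ℝ) = 2*(a:ℝ) + (ε:ℝ)*x by ring]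
  | o =>
    simp only [Digit.Valid] at hd
    have hval : 2 ≤ a ∧ (ε = 1 ∨ ε = -1) := by
      rcases hd with h | ⟨_, _, hs⟩
      · exact h
      · simp at hs
    obtain ⟨ha2, hε⟩ := hval
    have ha : (2:ℝ) ≤ (a:ℝ) := by exact_mod_cast ha2
    rcases hε with hε | hε <;> subst hε
    · refine ⟨a - 1, a, a, a + 1, by ring, ?_⟩
      intro x hx
      obtain ⟨hx0, hx1⟩ := hx
      have hden : (0:ℝ) < (a:ℝ)*x + ((a:ℝ)+1) := by nlinarith
      refine ⟨by push_cast; linarith, by push_cast; nlinarith, by push_cast; nlinarith, ?_⟩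
      norm_num [h]
    · refine ⟨a, a - 1, a + 1, a, by ring, ?_⟩
      intro x hx
      obtain ⟨hx0, hx1⟩ := hx
      refine ⟨by push_cast; nlinarith, by push_cast; nlinarith, by push_cast; nlinarith, ?_⟩
      norm_num [h]

/-- Integer Möbius representation of a composed inverse branch. -/
lemma word_rep (l : List Digit) (hne : l ≠ []) (hval : ∀ d ∈ l, d.Valid) :
    ∃ p q r s : ℤ, (p*s - q*r)^2 = 1 ∧ ∀ x ∈ Icc (-(1:ℝ)/2) (3/2),
      0 < (r:ℝ)*x + s ∧ hWord l x = ((p:ℝ)*x + q)/((r:ℝ)*x + s) ∧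
      hWord l x ∈ Icc (0:ℝ) 1 := by
  induction l with
  | nil => exact absurd rfl hne
  | cons d t ih =>
    obtain ⟨α, β, γ, δ, hdet, hprop⟩ := digit_rep d (hval d List.mem_cons_self)
    rcases eq_or_ne t [] with rfl | htne
    · refine ⟨α, β, γ, δ, hdet, ?_⟩
      intro x hx
      obtain ⟨hpos, hnum0, hnumle, heq⟩ := hprop x hx
      refine ⟨hpos, by rw [hWord_single']; exact heq, ?_⟩
      rw [hWord_single', heq]
      exact ⟨div_nonneg hnum0 hpos.le, (div_le_one hpos).mpr hnumle⟩
    · obtain ⟨p, q, r, s, hdet2, hprop2⟩ := ih htne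
        (fun e he => hval e (List.mem_cons_of_mem d he))
      refine ⟨α*p + β*r, α*q + β*s, γ*p + δ*r, γ*q + δ*s, ?_, ?_⟩
      · have e : (α*p + β*r)*(γ*q + δ*s) - (α*q + β*s)*(γ*p + δ*r)
            = (α*δ - β*γ)*(p*s - q*r) := by ring
        rw [e, mul_pow, hdet, hdet2, one_mul]
      · intro x hx
        obtain ⟨hD, heqt, hmemt⟩ := hprop2 x hx
        obtain ⟨hposy, hnum0y, hnumley, heqy⟩ := hprop (hWord t x) (Icc01_subset_J hmemt)
        have hN : (p:ℝ)*x + q = hWord t x * ((r:ℝ)*x + s) := by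
          rw [heqt, div_mul_cancel₀ _ (ne_of_gt hD)]
        have e1 : ((γ*p + δ*r : ℤ):ℝ)*x + ((γ*q + δ*s : ℤ):ℝ)
            = ((r:ℝ)*x + s) * ((γ:ℝ)*(hWord t x) + δ) := by
          push_cast; linear_combination (γ:ℝ) * hN
        have e2 : ((α*p + β*r : ℤ):ℝ)*x + ((α*q + β*s : ℤ):ℝ)
            = ((r:ℝ)*x + s) * ((α:ℝ)*(hWord t x) + β) := by
          push_cast; linear_combination (α:ℝ) * hN
        have hpos' : 0 < ((γ*p + δ*r : ℤ):ℝ)*x + ((γ*q + δ*s : ℤ):ℝ) := by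
          rw [e1]; exact mul_pos hD hposy
        have heq' : hWord (d :: t) x
            = (((α*p + β*r : ℤ):ℝ)*x + ((α*q + β*s : ℤ):ℝ))
              / (((γ*p + δ*r : ℤ):ℝ)*x + ((γ*q + δ*s : ℤ):ℝ)) := by
          rw [hWord_cons', heqy, e1, e2, mul_div_mul_left _ _ (ne_of_gt hD)]
        refine ⟨hpos', heq', ?_⟩
        rw [heq']
        constructor
        · exact div_nonneg (by rw [e2]; exact mul_nonneg hD.le hnum0y) hpos'.le
        · rw [div_le_one hpos', e1, e2]
          exact mul_le_mul_of_nonneg_left hnumley hD.le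

set_option maxHeartbeats 1000000 in
/-- Abstract core Lipschitz estimate. -/
lemma core_aux {Dx Dy bx b2 fx fy P axy : ℝ}
    (hDx : 0 < Dx) (hDy : 0 < Dy)
    (hbx1 : 1/2 ≤ bx) (hbx2 : bx ≤ 6) (hby1 : 1/2 ≤ b2) (hby2 : b2 ≤ 6)
    (hfx1 : 1/2 ≤ fx) (hfx2 : fx ≤ 6) (hfy1 : 1/2 ≤ fy) (hfy2 : fy ≤ 6)
    (hP1 : 1 ≤ P) (hP9y : P ≤ 9*(Dy*Dy)) (hP9 : P ≤ 9*(Dx*Dy))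
    (haxy : 0 ≤ axy)
    (hA : |1/Dx^2 - 1/Dy^2| ≤ 4*axy/(Dx*Dy))
    (hb : |bx - b2| ≤ 100*(axy/(Dx*Dy)))
    (hf : |fx - fy| ≤ 100*axy) :
    |bx/(Dx^2*fx) - b2/(Dy^2*fy)| ≤ 40000/P * axy := by
  have hfx0 : fx ≠ 0 := by linarith
  have hfy0 : fy ≠ 0 := by linarith
  have hDx0 : Dx ≠ 0 := ne_of_gt hDx
  have hDy0 : Dy ≠ 0 := ne_of_gt hDy
  have hP0 : (0:ℝ) < P := by linarith
  have hDxDy : (0:ℝ) < Dx*Dy := mul_pos hDx hDy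
  have split : bx/(Dx^2*fx) - b2/(Dy^2*fy)
      = (1/Dx^2 - 1/Dy^2)*(bx/fx) + (1/Dy^2)*((bx-b2)/fx)
        + (1/Dy^2)*(b2*(fy-fx)/(fx*fy)) := by
    field_simp
    ring
  have hinv2 : 1/Dy^2 ≤ 9/P := by
    rw [div_le_div_iff₀ (by positivity) hP0]
    nlinarith
  have hinv2' : 1/Dy^2 ≤ 9 := by
    have h9 : (9:ℝ)/P ≤ 9 := by
      rw [div_le_iff₀ hP0]; nlinarith
    linarith
  have hDy2pos : (0:ℝ) < 1/Dy^2 := by positivity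
  have h1 : |(1/Dx^2 - 1/Dy^2)*(bx/fx)| ≤ 432*axy/P := by
    rw [abs_mul]
    have hbf : |bx/fx| ≤ 12 := by
      rw [abs_div, abs_of_nonneg (by linarith : (0:ℝ) ≤ bx),
        abs_of_nonneg (by linarith : (0:ℝ) ≤ fx), div_le_iff₀ (by linarith)]
      nlinarith
    have hmm := mul_le_mul hA hbf (abs_nonneg _) (by positivity)
    have h48 : 4*axy/(Dx*Dy)*12 ≤ 432*axy/P := by
      rw [div_mul_eq_mul_div, div_le_div_iff₀ hDxDy hP0]
      have := mul_le_mul_of_nonneg_left hP9 haxy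
      nlinarith
    linarith
  have h2 : |(1/Dy^2)*((bx-b2)/fx)| ≤ 16200*axy/P := by
    rw [abs_mul, abs_of_pos hDy2pos, abs_div,
      abs_of_nonneg (by linarith : (0:ℝ) ≤ fx)]
    have hb' : |bx - b2| ≤ 900*axy/P := by
      have h19 : axy/(Dx*Dy) ≤ 9*axy/P := by
        rw [div_le_div_iff₀ hDxDy hP0]
        have := mul_le_mul_of_nonneg_left hP9 haxy
        nlinarith
      calc |bx - b2| ≤ 100*(axy/(Dx*Dy)) := hb
        _ ≤ 100*(9*axy/P) := by linarith
        _ = 900*axy/P := by ring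
    have haP : (0:ℝ) ≤ 900*axy/P := by positivity
    have hfx' : |bx - b2|/fx ≤ 2*(900*axy/P) := by
      rw [div_le_iff₀ (by linarith : (0:ℝ) < fx)]
      nlinarith [abs_nonneg (bx - b2)]
    calc 1/Dy^2 * (|bx-b2|/fx) ≤ 9 * (2*(900*axy/P)) := by
          apply mul_le_mul hinv2' hfx' (by positivity) (by norm_num)
      _ = 16200*axy/P := by ring
  have h3 : |(1/Dy^2)*(b2*(fy-fx)/(fx*fy))| ≤ 21600*axy/P := by
    rw [abs_mul, abs_of_pos hDy2pos, abs_div, abs_mul,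
      abs_of_nonneg (by linarith : (0:ℝ) ≤ b2),
      abs_of_pos (by nlinarith : (0:ℝ) < fx*fy)]
    have habs : |fy - fx| ≤ 100*axy := by rw [abs_sub_comm]; exact hf
    have hq : b2*|fy-fx|/(fx*fy) ≤ 2400*axy := by
      rw [div_le_iff₀ (by nlinarith : (0:ℝ) < fx*fy)]
      have hn1 : b2*|fy-fx| ≤ 6*(100*axy) :=
        mul_le_mul hby2 habs (abs_nonneg _) (by norm_num)
      have hn2 : 2400*axy*(1/4) ≤ 2400*axy*(fx*fy) :=
        mul_le_mul_of_nonneg_left (by nlinarith : (1/4:ℝ) ≤ fx*fy) (by positivity)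
      linarith
    calc 1/Dy^2 * (b2*|fy-fx|/(fx*fy)) ≤ (9/P) * (2400*axy) := by
          apply mul_le_mul hinv2 hq (by positivity) (by positivity)
      _ = 21600*axy/P := by ring
  rw [split]
  have habc := abs_add_le ((1/Dx^2 - 1/Dy^2)*(bx/fx) + (1/Dy^2)*((bx-b2)/fx))
    ((1/Dy^2)*(b2*(fy-fx)/(fx*fy)))
  have hab := abs_add_le ((1/Dx^2 - 1/Dy^2)*(bx/fx)) ((1/Dy^2)*((bx-b2)/fx))
  have heq : 40000/P*axy = 40000*axy/P := by ring
  have hle : 432*axy/P + 16200*axy/P + 21600*axy/P ≤ 40000*axy/P := by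
    rw [← add_div, ← add_div, div_le_div_iff₀ hP0 hP0]
    nlinarith
  linarith

set_option maxHeartbeats 2000000 in
/-- the `n`-th iterate of the normalized transfer operator
applied to the indicator of the cylinder `I_{A^{(n)}} = h_{A^{(n)}}([0,1])`,
namely `x ↦ |h_{A^{(n)}}'(x)| f_μ(h_{A^{(n)}} x) / f_μ(x)`, has total
variation at most `C · μ(I_{A^{(n)}})`. -/
theorem variation_of_normalized_iterate :
    ∃ C : ℝ, 0 < C ∧ ∀ l : List Digit, l ≠ [] → (∀ d ∈ l, d.Valid) →
      eVariationOn (fun x => |deriv (hWord l) x| * fdens (hWord l x) / fdens x)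
          (Set.Icc (0 : ℝ) 1)
        ≤ ENNReal.ofReal C * mu (hWord l '' Set.Icc (0 : ℝ) 1) := by
  refine ⟨80000, by norm_num, ?_⟩
  intro l hne hval
  obtain ⟨p, q, r, s, hdet, hprop⟩ := word_rep l hne hval
  have hmem0 : (0:ℝ) ∈ Icc (-(1:ℝ)/2) (3/2) := by constructor <;> norm_num
  have hmem1 : (1:ℝ) ∈ Icc (-(1:ℝ)/2) (3/2) := by constructor <;> norm_num
  have hmemm : (-(1:ℝ)/2) ∈ Icc (-(1:ℝ)/2) (3/2) := by constructor <;> norm_num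
  have hmem32 : (3/2:ℝ) ∈ Icc (-(1:ℝ)/2) (3/2) := by constructor <;> norm_num
  have hDpos : ∀ x ∈ Icc (0:ℝ) 1, 0 < (r:ℝ)*x + s :=
    fun x hx => (hprop x (Icc01_subset_J hx)).1
  have hHval : ∀ x ∈ Icc (0:ℝ) 1, hWord l x = ((p:ℝ)*x + q)/((r:ℝ)*x + s) :=
    fun x hx => (hprop x (Icc01_subset_J hx)).2.1
  have hHmem : ∀ x ∈ Icc (0:ℝ) 1, hWord l x ∈ Icc (0:ℝ) 1 :=
    fun x hx => (hprop x (Icc01_subset_J hx)).2.2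
  have hneg : 0 < (r:ℝ)*(-(1:ℝ)/2) + s := (hprop _ hmemm).1
  have h32 : 0 < (r:ℝ)*(3/2) + s := (hprop _ hmem32).1
  -- integrality lower bounds
  have hs1 : (1:ℝ) ≤ (s:ℝ) := by
    have h0 : (0:ℝ) < (s:ℝ) := by have := (hprop 0 hmem0).1; simpa using this
    have : (0:ℤ) < s := by exact_mod_cast h0
    exact_mod_cast this
  have hrs1 : (1:ℝ) ≤ (r:ℝ) + (s:ℝ) := by
    have h0 : (0:ℝ) < (r:ℝ) + (s:ℝ) := by
      have := (hprop 1 hmem1).1; rw [mul_one] at this; exact this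
    have h0' : (0:ℤ) < r + s := by exact_mod_cast h0
    have : (1:ℤ) ≤ r + s := h0'
    exact_mod_cast this
  set P : ℝ := (s:ℝ) * ((r:ℝ) + (s:ℝ)) with hPdef
  have hP1 : (1:ℝ) ≤ P := by rw [hPdef]; nlinarith
  have hP0 : (0:ℝ) < P := by linarith
  have habsr : ∀ x ∈ Icc (0:ℝ) 1, |(r:ℝ)| ≤ 2*((r:ℝ)*x + s) := by
    intro x hx
    obtain ⟨hx0, hx1⟩ := hx
    rcases abs_cases (r:ℝ) with ⟨he, hr⟩ | ⟨he, hr⟩ <;> rw [he]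
    · nlinarith [mul_nonneg hr hx0]
    · nlinarith [mul_nonneg (by linarith : (0:ℝ) ≤ -(r:ℝ)) (by linarith : (0:ℝ) ≤ 1 - x)]
  have hD3 : ∀ x ∈ Icc (0:ℝ) 1, ∀ y ∈ Icc (0:ℝ) 1,
      (r:ℝ)*y + s ≤ 3*((r:ℝ)*x + s) := by
    intro x hx y hy
    have h1 : (r:ℝ)*(y - x) ≤ |(r:ℝ)| * |y - x| := le_trans (le_abs_self _) (le_of_eq (abs_mul _ _))
    have h2 : |y - x| ≤ 1 := by
      rw [abs_le]; constructor <;> [linarith [hx.1, hx.2, hy.1, hy.2]; linarith [hx.1, hx.2, hy.1, hy.2]]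
    have h3 := mul_le_mul_of_nonneg_left h2 (abs_nonneg (r:ℝ))
    have h4 := habsr x hx
    nlinarith
  have hP9 : ∀ x ∈ Icc (0:ℝ) 1, ∀ y ∈ Icc (0:ℝ) 1,
      P ≤ 9*(((r:ℝ)*x + s)*((r:ℝ)*y + s)) := by
    intro x hx y hy
    have h1 : (s:ℝ) ≤ 3*((r:ℝ)*x + s) := by
      have := hD3 x hx 0 (by constructor <;> norm_num)
      rw [mul_zero, zero_add] at this
      exact this
    have h2 : (r:ℝ) + s ≤ 3*((r:ℝ)*y + s) := by
      have := hD3 y hy 1 (by constructor <;> norm_num)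
      rw [mul_one] at this
      exact this
    have h5 := mul_le_mul h1 h2 (by linarith) (by linarith [hDpos x hx])
    rw [hPdef]; nlinarith
  have hdet_abs : |(p:ℝ)*(s:ℝ) - (q:ℝ)*(r:ℝ)| = 1 := by
    have ht : p*s - q*r = 1 ∨ p*s - q*r = -1 := by
      have h2 : (p*s - q*r) * (p*s - q*r) = 1 := by nlinarith [hdet]
      rcases Int.eq_one_or_neg_one_of_mul_eq_one' h2 with ⟨h, _⟩ | ⟨h, _⟩
      · exact Or.inl h
      · exact Or.inr h
    rcases ht with h | h
    · have : (p:ℝ)*(s:ℝ) - (q:ℝ)*(r:ℝ) = 1 := by exact_mod_cast congrArg (Int.cast : ℤ → ℝ) h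
      rw [this]; norm_num
    · have : (p:ℝ)*(s:ℝ) - (q:ℝ)*(r:ℝ) = -1 := by exact_mod_cast congrArg (Int.cast : ℤ → ℝ) h
      rw [this]; norm_num
  -- the derivative
  have hderiv : ∀ x ∈ Icc (0:ℝ) 1,
      deriv (hWord l) x = ((p:ℝ)*(s:ℝ) - (q:ℝ)*(r:ℝ))/((r:ℝ)*x + s)^2 := by
    intro x hx
    have hxm : x ∈ Ioo (-(1:ℝ)/2) (3/2) := ⟨by linarith [hx.1], by linarith [hx.2]⟩
    have hev : (fun y => ((p:ℝ)*y + q)/((r:ℝ)*y + s)) =ᶠ[𝓝 x] hWord l := by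
      filter_upwards [Ioo_mem_nhds hxm.1 hxm.2] with y hy
      exact ((hprop y (Ioo_subset_Icc_self hy)).2.1).symm
    have hd1 : HasDerivAt (fun y : ℝ => (p:ℝ)*y + q) (p:ℝ) x := by
      have h0 := ((hasDerivAt_id x).const_mul (p:ℝ)).add_const (q:ℝ)
      simp only [mul_one, id] at h0 ⊢
      exact h0
    have hd2 : HasDerivAt (fun y : ℝ => (r:ℝ)*y + s) (r:ℝ) x := by
      have h0 := ((hasDerivAt_id x).const_mul (r:ℝ)).add_const (s:ℝ)
      simp only [mul_one, id] at h0 ⊢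
      exact h0
    have hdd := hd1.div hd2 (ne_of_gt (hDpos x hx))
    rw [← hev.deriv_eq, show deriv (fun y => ((p:ℝ)*y + q)/((r:ℝ)*y + s)) x = _ from hdd.deriv]
    congr 1
    ring
  have hderiv_abs : ∀ x ∈ Icc (0:ℝ) 1,
      |deriv (hWord l) x| = 1/((r:ℝ)*x + s)^2 := by
    intro x hx
    rw [hderiv x hx, abs_div, hdet_abs, abs_of_pos (pow_pos (hDpos x hx) 2)]
  -- difference of the branch at two points
  have hHdiff : ∀ x ∈ Icc (0:ℝ) 1, ∀ y ∈ Icc (0:ℝ) 1,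
      |hWord l x - hWord l y| = |x - y|/(((r:ℝ)*x + s)*((r:ℝ)*y + s)) := by
    intro x hx y hy
    have e : hWord l x - hWord l y
        = ((p:ℝ)*(s:ℝ) - (q:ℝ)*(r:ℝ))*(x - y)/(((r:ℝ)*x + s)*((r:ℝ)*y + s)) := by
      rw [hHval x hx, hHval y hy]
      have hx0 : (r:ℝ)*x + s ≠ 0 := ne_of_gt (hDpos x hx)
      have hy0 : (r:ℝ)*y + s ≠ 0 := ne_of_gt (hDpos y hy)
      rw [div_sub_div _ _ hx0 hy0]
      ring
    rw [e, abs_div, abs_mul, hdet_abs, one_mul,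
      abs_of_pos (mul_pos (hDpos x hx) (hDpos y hy))]
  -- the key Lipschitz property
  have hlip : LipschitzOnWith (Real.toNNReal (40000/P))
      (fun x => |deriv (hWord l) x| * fdens (hWord l x) / fdens x) (Icc (0:ℝ) 1) := by
    apply LipschitzOnWith.of_dist_le_mul
    intro x hx y hy
    rw [Real.dist_eq, Real.dist_eq, Real.coe_toNNReal _ (div_nonneg (by norm_num) hP0.le)]
    have hgx : |deriv (hWord l) x| * fdens (hWord l x) / fdens x
        = fdens (hWord l x) / (((r:ℝ)*x + s)^2 * fdens x) := by
      rw [hderiv_abs x hx, one_div, inv_mul_eq_div, div_div]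
    have hgy : |deriv (hWord l) y| * fdens (hWord l y) / fdens y
        = fdens (hWord l y) / (((r:ℝ)*y + s)^2 * fdens y) := by
      rw [hderiv_abs y hy, one_div, inv_mul_eq_div, div_div]
    rw [hgx, hgy]
    have hDx := hDpos x hx
    have hDy := hDpos y hy
    have hbx := fdens_bounds (hHmem x hx)
    have hby := fdens_bounds (hHmem y hy)
    have hfx := fdens_bounds hx
    have hfy := fdens_bounds hy
    have hP9y := hP9 y hy y hy
    have hP9xy := hP9 x hx y hy
    -- hA
    have hA : |1/((r:ℝ)*x + s)^2 - 1/((r:ℝ)*y + s)^2|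
        ≤ 4*|x - y|/(((r:ℝ)*x + s)*((r:ℝ)*y + s)) := by
      have e : 1/((r:ℝ)*x + s)^2 - 1/((r:ℝ)*y + s)^2
          = ((r:ℝ)*(y - x))*(((r:ℝ)*x + s) + ((r:ℝ)*y + s))
            /(((r:ℝ)*x + s)^2*((r:ℝ)*y + s)^2) := by
        field_simp
        ring
      rw [e, abs_div, abs_mul,
        abs_of_pos (by positivity : (0:ℝ) < ((r:ℝ)*x + s)^2*((r:ℝ)*y + s)^2),
        abs_of_pos (by linarith : (0:ℝ) < ((r:ℝ)*x + s) + ((r:ℝ)*y + s)),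
        div_le_div_iff₀ (by positivity) (mul_pos hDx hDy)]
      have h4 : |(r:ℝ)| * (((r:ℝ)*x + s) + ((r:ℝ)*y + s))
          ≤ 4*(((r:ℝ)*x + s)*((r:ℝ)*y + s)) := by
        have hx' := mul_le_mul_of_nonneg_right (habsr y hy) hDx.le
        have hy' := mul_le_mul_of_nonneg_right (habsr x hx) hDy.le
        nlinarith
      have hyx : |(r:ℝ)*(y - x)| = |(r:ℝ)| * |x - y| := by
        rw [abs_mul, abs_sub_comm y x]
      rw [hyx]
      have hfin := mul_le_mul_of_nonneg_right h4
        (by positivity : (0:ℝ) ≤ |x - y| * (((r:ℝ)*x + s)*((r:ℝ)*y + s)))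
      linarith [hfin]
    -- hb
    have hbdiff : |fdens (hWord l x) - fdens (hWord l y)|
        ≤ 100*(|x - y|/(((r:ℝ)*x + s)*((r:ℝ)*y + s))) := by
      have := fdens_lip (hHmem x hx) (hHmem y hy)
      rw [hHdiff x hx y hy] at this
      exact this
    have := core_aux hDx hDy hbx.1 hbx.2 hby.1 hby.2 hfx.1 hfx.2 hfy.1 hfy.2
      hP1 (by nlinarith) (by nlinarith) (abs_nonneg (x - y)) hA hbdiff
      (fdens_lip hx hy)
    exact this
  -- variation bound
  have hvar : eVariationOn (fun x => |deriv (hWord l) x| * fdens (hWord l x) / fdens x)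
      (Icc (0:ℝ) 1) ≤ ENNReal.ofReal (40000/P) := by
    have h1 := hlip.comp_eVariationOn_le (mapsTo_id (Icc (0:ℝ) 1))
    have h2 : eVariationOn (id : ℝ → ℝ) (Icc (0:ℝ) 1) ≤ ENNReal.ofReal 1 := by
      have := (monotoneOn_id (s := Icc (0:ℝ) 1)).eVariationOn_le
        (left_mem_Icc.mpr zero_le_one) (right_mem_Icc.mpr zero_le_one)
      simpa [Set.inter_self] using this
    have h3 : eVariationOn (fun x => |deriv (hWord l) x| * fdens (hWord l x) / fdens x)
        (Icc (0:ℝ) 1)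
        ≤ (Real.toNNReal (40000/P) : ENNReal) * ENNReal.ofReal 1 := by
      refine le_trans ?_ (mul_le_mul_right h2 _)
      simpa [Function.comp_def] using h1
    rw [ENNReal.ofReal_one, mul_one] at h3
    exact h3
  -- measure lower bound
  have hmu : ENNReal.ofReal ((1/2) * (1/P)) ≤ mu (hWord l '' Icc (0:ℝ) 1) := by
    set u := hWord l 0 with hu
    set v := hWord l 1 with hv
    have hum : u ∈ Icc (0:ℝ) 1 := hHmem 0 (by constructor <;> norm_num)
    have hvm : v ∈ Icc (0:ℝ) 1 := hHmem 1 (by constructor <;> norm_num)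
    have hcont : ContinuousOn (hWord l) (Icc (0:ℝ) 1) := by
      apply ContinuousOn.congr (f := fun x => ((p:ℝ)*x + q)/((r:ℝ)*x + s))
      · exact ContinuousOn.div (by fun_prop) (by fun_prop)
          (fun x hx => ne_of_gt (hDpos x hx))
      · exact fun x hx => hHval x hx
    have himg : Icc (u ⊓ v) (u ⊔ v) ⊆ hWord l '' Icc (0:ℝ) 1 := by
      have hiv := intermediate_value_uIcc
        (by rwa [uIcc_of_le zero_le_one] : ContinuousOn (hWord l) (uIcc (0:ℝ) 1))
      rw [uIcc_of_le zero_le_one] at hiv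
      intro z hz
      exact hiv hz
    have hsub : Ioo (u ⊓ v) (u ⊔ v) ⊆ Ioo (0:ℝ) 1 := by
      intro z hz
      constructor
      · exact lt_of_le_of_lt (le_min hum.1 hvm.1) hz.1
      · exact lt_of_lt_of_le hz.2 (max_le hum.2 hvm.2)
    have hba : (u ⊔ v) - (u ⊓ v) = 1/P := by
      have := hHdiff 0 (by constructor <;> norm_num) 1 (by constructor <;> norm_num)
      rw [← hu, ← hv] at this
      rw [max_sub_min_eq_abs]
      rw [show |(0:ℝ) - 1| = 1 by norm_num] at this
      rw [show ((r:ℝ)*0 + s) = (s:ℝ) by ring, show ((r:ℝ)*1 + s) = (r:ℝ) + s by ring] at this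
      rw [abs_sub_comm, this, hPdef]
    have hmono : mu (Ioo (u ⊓ v) (u ⊔ v)) ≤ mu (hWord l '' Icc (0:ℝ) 1) :=
      measure_mono (subset_trans Ioo_subset_Icc_self himg)
    have hcompute : ENNReal.ofReal ((1/2) * (1/P)) ≤ mu (Ioo (u ⊓ v) (u ⊔ v)) := by
      rw [mu, withDensity_apply _ measurableSet_Ioo,
        Measure.restrict_restrict measurableSet_Ioo,
        inter_eq_self_of_subset_left hsub]
      have hstep : ∫⁻ _ in Ioo (u ⊓ v) (u ⊔ v), ENNReal.ofReal (1/2) ∂volume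
          ≤ ∫⁻ x in Ioo (u ⊓ v) (u ⊔ v), ENNReal.ofReal (fdens x) ∂volume := by
        apply setLIntegral_mono fdens_measurable.ennreal_ofReal
        intro x hxm
        apply ENNReal.ofReal_le_ofReal
        have hx01 : x ∈ Icc (0:ℝ) 1 := ⟨(hsub hxm).1.le, (hsub hxm).2.le⟩
        exact (fdens_bounds hx01).1
      have hconst : ∫⁻ _ in Ioo (u ⊓ v) (u ⊔ v), ENNReal.ofReal (1/2) ∂volume
          = ENNReal.ofReal (1/2) * volume (Ioo (u ⊓ v) (u ⊔ v)) :=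
        setLIntegral_const _ _
      rw [Real.volume_Ioo, hba] at hconst
      calc ENNReal.ofReal ((1/2) * (1/P))
          = ENNReal.ofReal (1/2) * ENNReal.ofReal (1/P) := ENNReal.ofReal_mul (by norm_num)
        _ = ∫⁻ _ in Ioo (u ⊓ v) (u ⊔ v), ENNReal.ofReal (1/2) ∂volume := hconst.symm
        _ ≤ ∫⁻ x in Ioo (u ⊓ v) (u ⊔ v), ENNReal.ofReal (fdens x) ∂volume := hstep
    exact le_trans hcompute hmono
  calc eVariationOn (fun x => |deriv (hWord l) x| * fdens (hWord l x) / fdens x)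
        (Icc (0:ℝ) 1)
      ≤ ENNReal.ofReal (40000/P) := hvar
    _ = ENNReal.ofReal 80000 * ENNReal.ofReal ((1/2) * (1/P)) := by
        rw [← ENNReal.ofReal_mul (by norm_num)]
        congr 1
        field_simp
        ring
    _ ≤ ENNReal.ofReal 80000 * mu (hWord l '' Icc (0:ℝ) 1) :=
        mul_le_mul_right hmu _

end SCF
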